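/- Let Y ⊆ Σ^ℤ be a subshift with a one-block topological conjugacy φ onto X̃ ⊆ Σ̃^ℤ given by a one-block map Φ : Σ → Σ̃ with Φ⁻¹(Σ̃_synchro(X̃)) ⊆ Σ_synchro(Y), where X̃ is strongly synchronizing and φ⁻¹ has coding window [-L, L]. Then Y is strongly synchronizing, with constant Q = L + Q̃ where Q̃ is a strong synchronization constant for X̃. -/

import Mathlib

/-- The shift on `Σ^ℤ`: `(x_i)_{i∈ℤ} ↦ (x_{i+1})_{i∈ℤ}`. -/
def shift {A : Type*} (x : ℤ → A) : ℤ → A := fun i => x (i + 1)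

/-- The word `x_{[a,b]}` carried by the block of `x` on the interval `[a, b]`. -/
def block {A : Type*} (x : ℤ → A) (a b : ℤ) : List A :=
  (List.range (b + 1 - a).toNat).map fun k => x (a + k)

/-- A word is admissible for `X` if it appears in a point of `X`. -/
def Admissible {A : Type*} (X : Set (ℤ → A)) (w : List A) : Prop :=
  ∃ x ∈ X, ∃ n : ℤ, ∀ (k : ℕ) (h : k < w.length), x (n + k) = w.get ⟨k, h⟩

/-- A word `v` is synchronizing for `X` if it is admissible and whenever `uv` and `vw`
are admissible, so is `uvw`. -/
def IsSyncWord {A : Type*} (X : Set (ℤ → A)) (v : List A) : Prop :=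
  Admissible X v ∧ ∀ u w : List A, Admissible X (u ++ v) → Admissible X (v ++ w) →
    Admissible X (u ++ v ++ w)

/-- A subshift: a nonempty, closed, shift-invariant subset of `Σ^ℤ`. -/
def IsSubshift {A : Type*} [TopologicalSpace A] (X : Set (ℤ → A)) : Prop :=
  X.Nonempty ∧ IsClosed X ∧ shift '' X = X

/-- Topological transitivity of a subshift, expressed on its language: any two admissible
words can be joined by an admissible transition word. -/
def LangTransitive {A : Type*} (X : Set (ℤ → A)) : Prop :=
  ∀ u v : List A, Admissible X u → Admissible X v → ∃ w, Admissible X (u ++ w ++ v)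

/-- A synchronizing subshift: topologically transitive with a synchronizing word. -/
def SyncSubshift {A : Type*} (X : Set (ℤ → A)) : Prop :=
  LangTransitive X ∧ ∃ v : List A, IsSyncWord X v

/-- A strongly synchronizing subshift: synchronizing symbols appear uniformly close
(within distance `Q`) to synchronizing words. -/
def StronglySync {A : Type*} (X : Set (ℤ → A)) : Prop :=
  SyncSubshift X ∧ ∃ Q : ℕ, ∀ x ∈ X, ∀ I₁ I₂ : ℤ, I₁ ≤ I₂ →
    IsSyncWord X (block x I₁ I₂) →
    ∃ i : ℤ, I₁ - Q ≤ i ∧ i ≤ I₂ + Q ∧ IsSyncWord X [x i]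

/-- The higher block system `X^{⟨[a,b]⟩}` of `X`, over the alphabet of words. -/
def higherBlock {A : Type*} (X : Set (ℤ → A)) (a b : ℤ) : Set (ℤ → List A) :=
  { y | ∃ x ∈ X, ∀ i : ℤ, y i = block x (i + a) (i + b) }

/-- `X` is strongly synchronizing with constant `Q`. -/
def StrongSyncConst {A : Type*} (X : Set (ℤ → A)) (Q : ℤ) : Prop :=
  ∀ x ∈ X, ∀ I₁ I₂ : ℤ, I₁ ≤ I₂ → IsSyncWord X (block x I₁ I₂) →
    ∃ i : ℤ, I₁ - Q ≤ i ∧ i ≤ I₂ + Q ∧ IsSyncWord X [x i]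

lemma block_def {A : Type*} (x : ℤ → A) (a b : ℤ) :
    block x a b = (List.range (b + 1 - a).toNat).map (fun k : ℕ => x (a + (k:ℤ))) := by
  unfold block
  induction List.range (b + 1 - a).toNat with
  | nil => rfl
  | cons h t ih => simp_all [List.map_cons]

lemma block_length {A : Type*} (x : ℤ → A) (a b : ℤ) :
    (block x a b).length = (b + 1 - a).toNat := by
  rw [block_def, List.length_map, List.length_range]

lemma block_getElem {A : Type*} (x : ℤ → A) (a b : ℤ) (k : ℕ) (h : k < (block x a b).length) :
    (block x a b)[k] = x (a + k) := by
  have h' := h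
  rw [block_length] at h'
  rw [List.getElem_of_eq (block_def x a b) h, List.getElem_map, List.getElem_range]

lemma block_get {A : Type*} (x : ℤ → A) (a b : ℤ) (k : ℕ) (h : k < (block x a b).length) :
    (block x a b).get ⟨k, h⟩ = x (a + k) := by
  rw [List.get_eq_getElem, block_getElem]

lemma block_map {A B : Type*} (Φ : A → B) (x : ℤ → A) (a b : ℤ) :
    block (fun i => Φ (x i)) a b = (block x a b).map Φ := by
  rw [block_def, block_def, List.map_map]; rfl

lemma block_shift {A : Type*} (x : ℤ → A) (t a b : ℤ) :
    block (fun j => x (j + t)) a b = block x (a + t) (b + t) := by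
  rw [block_def, block_def]
  have h1 : b + t + 1 - (a + t) = b + 1 - a := by ring
  rw [h1]
  apply List.map_congr_left
  intro k _
  have e : a + (k : ℤ) + t = a + t + k := by ring
  show x (a + (k : ℤ) + t) = x (a + t + k)
  rw [e]

lemma block_congr {A : Type*} {x y : ℤ → A} {a b : ℤ}
    (h : ∀ j : ℤ, a ≤ j → j ≤ b → x j = y j) : block x a b = block y a b := by
  apply List.ext_getElem
  · rw [block_length, block_length]
  · intro k h1 h2
    rw [block_getElem, block_getElem]
    rw [block_length] at h1
    exact h (a + k) (by omega) (by omega)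

lemma block_append {A : Type*} (x : ℤ → A) (a b c : ℤ) (h1 : a - 1 ≤ b) (h2 : b ≤ c) :
    block x a c = block x a b ++ block x (b + 1) c := by
  apply List.ext_getElem
  · simp only [List.length_append, block_length]; omega
  · intro k hk1 hk2
    rw [List.getElem_append, block_getElem]
    split
    · rw [block_getElem]
    · rw [block_getElem]
      rename_i hlt
      rw [block_length] at hlt
      have e : a + (k : ℤ) = b + 1 + ((k - (block x a b).length : ℕ) : ℤ) := by
        rw [block_length]
        push_cast [Int.toNat_of_nonneg (by omega : (0:ℤ) ≤ b + 1 - a)]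
        omega
      rw [e]

lemma block_eq_of_witness {A : Type*} {x : ℤ → A} {w : List A} {n : ℤ}
    (h : ∀ (k : ℕ) (hk : k < w.length), x (n + k) = w.get ⟨k, hk⟩) :
    w = block x n (n + w.length - 1) := by
  apply List.ext_getElem
  · rw [block_length]; omega
  · intro k h1 h2
    rw [block_getElem]
    have := h k h1
    rw [List.get_eq_getElem] at this
    exact this.symm

lemma adm_block {A : Type*} {X : Set (ℤ → A)} {x : ℤ → A} (hx : x ∈ X) (a b : ℤ) :
    Admissible X (block x a b) :=
  ⟨x, hx, a, fun k h => (block_get x a b k h).symm⟩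

lemma block_eq_apply {A : Type*} {x y : ℤ → A} {a b c d : ℤ} (h : block x a b = block y c d)
    {j : ℤ} (h1 : a ≤ j) (h2 : j ≤ b) : x j = y (c + (j - a)) := by
  have hk : (j - a).toNat < (block x a b).length := by rw [block_length]; omega
  have hk' : (j - a).toNat < (block y c d).length := h ▸ hk
  have e3 : (block x a b)[(j - a).toNat] = (block y c d)[(j - a).toNat]'hk' :=
    List.getElem_of_eq h hk
  rw [block_getElem, block_getElem] at e3
  have hcast : ((j - a).toNat : ℤ) = j - a := by omega
  rw [hcast] at e3
  have e : a + (j - a) = j := by ring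
  rw [e] at e3
  exact e3

lemma shift_mem {A : Type*} {X : Set (ℤ → A)} (hX : shift '' X = X) (t : ℤ) {x : ℤ → A}
    (hx : x ∈ X) : (fun j => x (j + t)) ∈ X := by
  induction t using Int.induction_on with
  | zero => simpa using hx
  | succ k ih =>
    have : (fun j : ℤ => x (j + (k + 1))) = shift (fun j => x (j + k)) := by
      funext j
      show x (j + ((k:ℤ) + 1)) = x (j + 1 + k)
      congr 1
      ring
    rw [this, ← hX]
    exact Set.mem_image_of_mem _ ih
  | pred k ih =>
    have hmem : (fun j : ℤ => x (j + -(k : ℤ))) ∈ X := ih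
    rw [← hX] at hmem
    obtain ⟨z, hz, hze⟩ := hmem
    have hz2 : (fun j : ℤ => x (j + (-(k : ℤ) - 1))) = z := by
      funext j
      have h2 := congrFun hze (j - 1)
      simp only [shift] at h2
      rw [sub_add_cancel] at h2
      rw [h2]
      congr 1
      ring
    rw [hz2]
    exact hz

lemma adm_norm {A : Type*} {X : Set (ℤ → A)} (hX : shift '' X = X) {w : List A}
    (h : Admissible X w) : ∃ x ∈ X, w = block x 0 ((w.length : ℤ) - 1) := by
  obtain ⟨x, hx, n, hw⟩ := h
  refine ⟨fun j => x (j + n), shift_mem hX n hx, ?_⟩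
  have := block_eq_of_witness (x := fun j => x (j + n)) (w := w) (n := 0)
    (fun k hk => by simpa [add_comm] using hw k hk)
  simpa using this

lemma adm_prefix {A : Type*} {X : Set (ℤ → A)} {p q : List A}
    (h : Admissible X (p ++ q)) : Admissible X p := by
  obtain ⟨x, hx, n, hw⟩ := h
  refine ⟨x, hx, n, fun k hk => ?_⟩
  have hk' : k < (p ++ q).length := by simp; omega
  have := hw k hk'
  simpa [List.getElem_append_left hk] using this

lemma adm_suffix {A : Type*} {X : Set (ℤ → A)} {p q : List A}
    (h : Admissible X (p ++ q)) : Admissible X q := by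
  obtain ⟨x, hx, n, hw⟩ := h
  refine ⟨x, hx, n + p.length, fun k hk => ?_⟩
  have hk' : p.length + k < (p ++ q).length := by simp; omega
  have := hw (p.length + k) hk'
  have e : (p ++ q).get ⟨p.length + k, hk'⟩ = q.get ⟨k, hk⟩ := by
    simp [List.getElem_append_right]
  rw [e] at this
  rw [← this]
  congr 1
  push_cast
  ring

lemma sync_extend {A : Type*} {X : Set (ℤ → A)} {a v b : List A} (hv : IsSyncWord X v)
    (hadm : Admissible X (a ++ v ++ b)) : IsSyncWord X (a ++ v ++ b) := by
  refine ⟨hadm, fun u w hu hw => ?_⟩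
  have hu' : Admissible X ((u ++ a) ++ v) := by
    apply adm_prefix (q := b)
    simpa [List.append_assoc] using hu
  have hw' : Admissible X (v ++ (b ++ w)) := by
    apply adm_suffix (p := a)
    simpa [List.append_assoc] using hw
  have := hv.2 (u ++ a) (b ++ w) hu' hw'
  simpa [List.append_assoc] using this

lemma block_split {A : Type*} (x : ℤ → A) (a c d : ℤ) (h1 : a ≤ d) (h2 : d ≤ c + 1) :
    block x a c = block x a (d - 1) ++ block x d c := by
  have h3 := block_append x a (d - 1) c (by omega) (by omega)
  have e : d - 1 + 1 = d := by ring
  rw [e] at h3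
  exact h3

lemma block_eq_pointwise {A : Type*} {y z : ℤ → A} {a b c d : ℤ}
    (h : block y a b = block z c d) : ∀ j : ℤ, a ≤ j → j ≤ b → y j = z (j + (c - a)) := by
  intro j h1 h2
  have h3 := block_eq_apply h h1 h2
  have e : c + (j - a) = j + (c - a) := by ring
  rw [e] at h3
  exact h3

lemma block_sub {A : Type*} {y z : ℤ → A} {a b : ℤ} (t : ℤ)
    (h : ∀ j : ℤ, a ≤ j → j ≤ b → y j = z (j + t)) (c d : ℤ) (h1 : a ≤ c) (h2 : d ≤ b) :
    block y c d = block z (c + t) (d + t) := by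
  rw [← block_shift]
  exact block_congr fun j hj1 hj2 => h j (by omega) (by omega)

/-- If `φ : Y → X̃` is a one-block conjugacy given by `Φ : Σ → Σ̃` with
`Φ⁻¹(Σ̃_synchro(X̃)) ⊆ Σ_synchro(Y)`, `φ⁻¹` has coding window `[-L, L]`, and `X̃` is
strongly synchronizing with constant `Q̃`, then `Y` is strongly synchronizing with
constant `L + Q̃`. -/
theorem stmt17 {A B : Type*} [Fintype A] [Fintype B]
    [TopologicalSpace A] [DiscreteTopology A] [TopologicalSpace B] [DiscreteTopology B]
    (Y : Set (ℤ → A)) (Xt : Set (ℤ → B)) (hY : IsSubshift Y) (hXt : IsSubshift Xt)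
    (Φ : A → B) (G : (ℤ → B) → (ℤ → A))
    (hF : ∀ x ∈ Y, (fun i => Φ (x i)) ∈ Xt)
    (hG : ∀ y ∈ Xt, G y ∈ Y)
    (hGF : ∀ x ∈ Y, G (fun i => Φ (x i)) = x)
    (hFG : ∀ y ∈ Xt, (fun i => Φ (G y i)) = y)
    (L : ℤ) (hL : 0 ≤ L)
    (hGwin : ∀ y ∈ Xt, ∀ y' ∈ Xt, ∀ i : ℤ,
      (∀ j : ℤ, i - L ≤ j → j ≤ i + L → y j = y' j) → G y i = G y' i)
    (hsub : ∀ a : A, IsSyncWord Xt [Φ a] → IsSyncWord Y [a])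
    (hXtsync : SyncSubshift Xt) (Qt : ℤ) (hQt : 0 ≤ Qt)
    (hstrong : StrongSyncConst Xt Qt) :
    SyncSubshift Y ∧ StrongSyncConst Y (L + Qt) := by
  obtain ⟨ℓ, rfl⟩ : ∃ n : ℕ, L = (n : ℤ) := ⟨L.toNat, (Int.toNat_of_nonneg hL).symm⟩
  -- main pullback tool
  have pull : ∀ y ∈ Xt, ∀ x' : ℤ → A, x' ∈ Y → ∀ a b : ℤ,
      (∀ j : ℤ, a ≤ j → j ≤ b → y j = Φ (x' j)) →
      ∀ i : ℤ, a + ℓ ≤ i → i ≤ b - ℓ → G y i = x' i := by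
    intro y hy x' hx' a b hag i hi1 hi2
    have h1 : G y i = G (fun j => Φ (x' j)) i :=
      hGwin y hy _ (hF x' hx') i (fun j hj1 hj2 => hag j (by omega) (by omega))
    rw [h1, hGF x' hx']
  -- the key lemma: sync words of Y map to (extended) sync words of Xt
  have hmain : ∀ x ∈ Y, ∀ I₁ I₂ : ℤ, I₁ ≤ I₂ → IsSyncWord Y (block x I₁ I₂) →
      IsSyncWord Xt (block (fun i => Φ (x i)) (I₁ - ℓ) (I₂ + ℓ)) := by
    intro x hx I₁ I₂ h12 hv
    constructor
    · exact adm_block (hF x hx) _ _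
    · intro u w h1 h2
      have hNW : ((block (fun i => Φ (x i)) (I₁ - ℓ) (I₂ + ℓ)).length : ℤ)
          = I₂ - I₁ + 1 + 2 * ℓ := by rw [block_length]; omega
      -- left witness
      obtain ⟨y₁, hy₁, he₁⟩ := adm_norm hXt.2.2 h1
      have hlen₁ : (((u ++ block (fun i => Φ (x i)) (I₁ - ℓ) (I₂ + ℓ)).length : ℤ))
          = (u.length : ℤ) + (block (fun i => Φ (x i)) (I₁ - ℓ) (I₂ + ℓ)).length := by
        rw [List.length_append]; push_cast; ring
      rw [hlen₁] at he₁
      rw [block_split y₁ 0 ((u.length : ℤ) + (block (fun i => Φ (x i)) (I₁ - ℓ) (I₂ + ℓ)).length - 1)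
        (u.length) (by omega) (by omega)] at he₁
      obtain ⟨hu₁, hW₁⟩ := List.append_inj he₁ (by rw [block_length]; omega)
      have hpt₁ := block_eq_pointwise hW₁.symm
      have hxs₁ : (fun j => x (j + (I₁ - ℓ - (u.length : ℤ)))) ∈ Y := shift_mem hY.2.2 _ hx
      have hpull₁ : ∀ i : ℤ, (u.length : ℤ) + ℓ ≤ i → i ≤ (u.length : ℤ) + ℓ + (I₂ - I₁) →
          G y₁ i = x (i + (I₁ - ℓ - (u.length : ℤ))) := by
        intro i hi1 hi2
        exact pull y₁ hy₁ _ hxs₁ (u.length : ℤ)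
          ((u.length : ℤ) + (block (fun i => Φ (x i)) (I₁ - ℓ) (I₂ + ℓ)).length - 1)
          (fun j hj1 hj2 => hpt₁ j hj1 hj2) i (by omega) (by omega)
      have hvx₁ : block (G y₁) ((u.length : ℤ) + ℓ) ((u.length : ℤ) + ℓ + (I₂ - I₁))
          = block x I₁ I₂ := by
        have h3 := block_sub (I₁ - ℓ - (u.length : ℤ)) hpull₁ ((u.length : ℤ) + ℓ)
          ((u.length : ℤ) + ℓ + (I₂ - I₁)) le_rfl le_rfl
        have e1 : (u.length : ℤ) + ℓ + (I₁ - ℓ - (u.length : ℤ)) = I₁ := by ring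
        have e2 : (u.length : ℤ) + ℓ + (I₂ - I₁) + (I₁ - ℓ - (u.length : ℤ)) = I₂ := by ring
        rw [e1, e2] at h3
        exact h3
      have hadm1 : Admissible Y (block (G y₁) 0 ((u.length : ℤ) + ℓ - 1) ++ block x I₁ I₂) := by
        have hsp := block_split (G y₁) 0 ((u.length : ℤ) + ℓ + (I₂ - I₁))
          ((u.length : ℤ) + ℓ) (by omega) (by omega)
        rw [hvx₁] at hsp
        have := adm_block (hG y₁ hy₁) 0 ((u.length : ℤ) + ℓ + (I₂ - I₁))
        rw [hsp] at this
        exact this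
      -- right witness
      obtain ⟨y₂, hy₂, he₂⟩ := adm_norm hXt.2.2 h2
      have hlen₂ : (((block (fun i => Φ (x i)) (I₁ - ℓ) (I₂ + ℓ) ++ w).length : ℤ))
          = ((block (fun i => Φ (x i)) (I₁ - ℓ) (I₂ + ℓ)).length : ℤ) + w.length := by
        rw [List.length_append]; push_cast; ring
      rw [hlen₂] at he₂
      rw [block_split y₂ 0 (((block (fun i => Φ (x i)) (I₁ - ℓ) (I₂ + ℓ)).length : ℤ)
          + w.length - 1)
        ((block (fun i => Φ (x i)) (I₁ - ℓ) (I₂ + ℓ)).length) (by omega) (by omega)] at he₂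
      obtain ⟨hW₂, hw₂⟩ := List.append_inj he₂ (by rw [block_length, block_length]; omega)
      have hpt₂ := block_eq_pointwise hW₂.symm
      have hxs₂ : (fun j => x (j + (I₁ - ℓ - 0))) ∈ Y := shift_mem hY.2.2 _ hx
      have hpull₂ : ∀ i : ℤ, (ℓ : ℤ) ≤ i → i ≤ (ℓ : ℤ) + (I₂ - I₁) →
          G y₂ i = x (i + (I₁ - ℓ - 0)) := by
        intro i hi1 hi2
        exact pull y₂ hy₂ _ hxs₂ 0
          (((block (fun i => Φ (x i)) (I₁ - ℓ) (I₂ + ℓ)).length : ℤ) - 1)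
          (fun j hj1 hj2 => hpt₂ j hj1 hj2) i (by omega) (by omega)
      have hvx₂ : block (G y₂) (ℓ : ℤ) ((ℓ : ℤ) + (I₂ - I₁)) = block x I₁ I₂ := by
        have h3 := block_sub (I₁ - ℓ - 0) hpull₂ (ℓ : ℤ) ((ℓ : ℤ) + (I₂ - I₁)) le_rfl le_rfl
        have e1 : (ℓ : ℤ) + (I₁ - ℓ - 0) = I₁ := by ring
        have e2 : (ℓ : ℤ) + (I₂ - I₁) + (I₁ - ℓ - 0) = I₂ := by ring
        rw [e1, e2] at h3
        exact h3
      have hadm2 : Admissible Y (block x I₁ I₂ ++ block (G y₂) ((ℓ : ℤ) + (I₂ - I₁) + 1)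
          (((block (fun i => Φ (x i)) (I₁ - ℓ) (I₂ + ℓ)).length : ℤ) + w.length - 1)) := by
        have hsp := block_split (G y₂) (ℓ : ℤ)
          (((block (fun i => Φ (x i)) (I₁ - ℓ) (I₂ + ℓ)).length : ℤ) + w.length - 1)
          ((ℓ : ℤ) + (I₂ - I₁) + 1) (by omega) (by omega)
        have e : ((ℓ : ℤ) + (I₂ - I₁) + 1 - 1) = (ℓ : ℤ) + (I₂ - I₁) := by ring
        rw [e, hvx₂] at hsp
        have := adm_block (hG y₂ hy₂) (ℓ : ℤ)
          (((block (fun i => Φ (x i)) (I₁ - ℓ) (I₂ + ℓ)).length : ℤ) + w.length - 1)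
        rw [hsp] at this
        exact this
      -- glue in Y and push forward
      have hvz := hv.2 _ _ hadm1 hadm2
      obtain ⟨z, hz, hez⟩ := adm_norm hY.2.2 hvz
      have hadm : Admissible Xt ((block (G y₁) 0 ((u.length : ℤ) + ℓ - 1) ++ block x I₁ I₂ ++
          block (G y₂) ((ℓ : ℤ) + (I₂ - I₁) + 1)
          (((block (fun i => Φ (x i)) (I₁ - ℓ) (I₂ + ℓ)).length : ℤ) + w.length - 1)).map Φ) := by
        rw [hez, ← block_map]
        exact adm_block (hF z hz) _ _
      -- compute the mapped word
      have hA : (block (G y₁) 0 ((u.length : ℤ) + ℓ - 1)).map Φ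
          = u ++ block (fun i => Φ (x i)) (I₁ - ℓ) (I₁ - 1) := by
        rw [← block_map, hFG y₁ hy₁]
        rw [block_split y₁ 0 ((u.length : ℤ) + ℓ - 1) (u.length : ℤ) (by omega) (by omega)]
        congr 1
        · exact hu₁.symm
        · have h3 := block_sub (y := y₁) (z := fun i => Φ (x i)) (a := (u.length : ℤ))
            (b := (u.length : ℤ) + ((block (fun i => Φ (x i)) (I₁ - ℓ) (I₂ + ℓ)).length : ℤ) - 1)
            (I₁ - ℓ - (u.length : ℤ)) hpt₁ (u.length : ℤ)
            ((u.length : ℤ) + ℓ - 1) le_rfl (by omega)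
          have e1 : (u.length : ℤ) + (I₁ - ℓ - (u.length : ℤ)) = I₁ - ℓ := by ring
          have e2 : (u.length : ℤ) + ℓ - 1 + (I₁ - ℓ - (u.length : ℤ)) = I₁ - 1 := by ring
          rw [e1, e2] at h3
          exact h3
      have hC : (block (G y₂) ((ℓ : ℤ) + (I₂ - I₁) + 1)
          (((block (fun i => Φ (x i)) (I₁ - ℓ) (I₂ + ℓ)).length : ℤ) + w.length - 1)).map Φ
          = block (fun i => Φ (x i)) (I₂ + 1) (I₂ + ℓ) ++ w := by
        rw [← block_map, hFG y₂ hy₂]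
        rw [block_split y₂ ((ℓ : ℤ) + (I₂ - I₁) + 1)
          (((block (fun i => Φ (x i)) (I₁ - ℓ) (I₂ + ℓ)).length : ℤ) + w.length - 1)
          ((block (fun i => Φ (x i)) (I₁ - ℓ) (I₂ + ℓ)).length : ℤ) (by omega) (by omega)]
        congr 1
        · have h3 := block_sub (y := y₂) (z := fun i => Φ (x i)) (a := 0)
            (b := ((block (fun i => Φ (x i)) (I₁ - ℓ) (I₂ + ℓ)).length : ℤ) - 1)
            (I₁ - ℓ - 0) hpt₂ ((ℓ : ℤ) + (I₂ - I₁) + 1)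
            (((block (fun i => Φ (x i)) (I₁ - ℓ) (I₂ + ℓ)).length : ℤ) - 1)
            (by omega) le_rfl
          have e1 : (ℓ : ℤ) + (I₂ - I₁) + 1 + (I₁ - ℓ - 0) = I₂ + 1 := by ring
          have e2 : ((block (fun i => Φ (x i)) (I₁ - ℓ) (I₂ + ℓ)).length : ℤ) - 1
              + (I₁ - ℓ - 0) = I₂ + ℓ := by omega
          rw [e1, e2] at h3
          exact h3
        · exact hw₂.symm
      have hD : block (fun i => Φ (x i)) (I₁ - ℓ) (I₂ + ℓ)
          = block (fun i => Φ (x i)) (I₁ - ℓ) (I₁ - 1) ++ block (fun i => Φ (x i)) I₁ I₂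
            ++ block (fun i => Φ (x i)) (I₂ + 1) (I₂ + ℓ) := by
        rw [block_split (fun i => Φ (x i)) (I₁ - ℓ) (I₂ + ℓ) (I₂ + 1) (by omega) (by omega)]
        congr 1
        have e : I₂ + 1 - 1 = I₂ := by ring
        rw [e]
        rw [block_split (fun i => Φ (x i)) (I₁ - ℓ) I₂ I₁ (by omega) (by omega)]
      rw [List.map_append, List.map_append, hA, hC, ← block_map] at hadm
      rw [hD]
      have : u ++ (block (fun i => Φ (x i)) (I₁ - ℓ) (I₁ - 1) ++ block (fun i => Φ (x i)) I₁ I₂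
            ++ block (fun i => Φ (x i)) (I₂ + 1) (I₂ + ℓ)) ++ w
          = u ++ block (fun i => Φ (x i)) (I₁ - ℓ) (I₁ - 1) ++ block (fun i => Φ (x i)) I₁ I₂
            ++ (block (fun i => Φ (x i)) (I₂ + 1) (I₂ + ℓ) ++ w) := by
        simp [List.append_assoc]
      rw [this]
      exact hadm
  -- transitivity of Y
  have htrans : LangTransitive Y := by
    intro u v hu hv
    obtain ⟨xu, hxu, heu⟩ := adm_norm hY.2.2 hu
    obtain ⟨xv, hxv, hev⟩ := adm_norm hY.2.2 hv
    have hNU : ((block (fun i => Φ (xu i)) (-(ℓ:ℤ)) ((u.length : ℤ) - 1 + ℓ)).length : ℤ)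
        = (u.length : ℤ) + 2 * ℓ := by rw [block_length]; omega
    have hNV : ((block (fun i => Φ (xv i)) (-(ℓ:ℤ)) ((v.length : ℤ) - 1 + ℓ)).length : ℤ)
        = (v.length : ℤ) + 2 * ℓ := by rw [block_length]; omega
    obtain ⟨wt, hwt⟩ := hXtsync.1 _ _
      (adm_block (hF xu hxu) (-(ℓ:ℤ)) ((u.length : ℤ) - 1 + ℓ))
      (adm_block (hF xv hxv) (-(ℓ:ℤ)) ((v.length : ℤ) - 1 + ℓ))
    obtain ⟨y, hy, hey⟩ := adm_norm hXt.2.2 hwt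
    have hlen : (((block (fun i => Φ (xu i)) (-(ℓ:ℤ)) ((u.length : ℤ) - 1 + ℓ) ++ wt ++
        block (fun i => Φ (xv i)) (-(ℓ:ℤ)) ((v.length : ℤ) - 1 + ℓ)).length : ℤ))
        = ((block (fun i => Φ (xu i)) (-(ℓ:ℤ)) ((u.length : ℤ) - 1 + ℓ)).length : ℤ)
          + (wt.length : ℤ)
          + ((block (fun i => Φ (xv i)) (-(ℓ:ℤ)) ((v.length : ℤ) - 1 + ℓ)).length : ℤ) := by
      rw [List.length_append, List.length_append]; push_cast; ring
    rw [hlen] at hey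
    rw [block_split y 0
      (((block (fun i => Φ (xu i)) (-(ℓ:ℤ)) ((u.length : ℤ) - 1 + ℓ)).length : ℤ)
        + (wt.length : ℤ)
        + ((block (fun i => Φ (xv i)) (-(ℓ:ℤ)) ((v.length : ℤ) - 1 + ℓ)).length : ℤ) - 1)
      (((block (fun i => Φ (xu i)) (-(ℓ:ℤ)) ((u.length : ℤ) - 1 + ℓ)).length : ℤ)
        + (wt.length : ℤ)) (by omega) (by omega)] at hey
    obtain ⟨hey1, hV⟩ := List.append_inj hey
      (by simp only [List.length_append, block_length]; omega)
    rw [block_split y 0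
      (((block (fun i => Φ (xu i)) (-(ℓ:ℤ)) ((u.length : ℤ) - 1 + ℓ)).length : ℤ)
        + (wt.length : ℤ) - 1)
      ((block (fun i => Φ (xu i)) (-(ℓ:ℤ)) ((u.length : ℤ) - 1 + ℓ)).length : ℤ)
      (by omega) (by omega)] at hey1
    obtain ⟨hU, -⟩ := List.append_inj hey1 (by simp only [List.length_append, block_length]; omega)
    have hptU := block_eq_pointwise hU.symm
    have hptV := block_eq_pointwise hV.symm
    have hxsu : (fun j => xu (j + (-(ℓ:ℤ) - 0))) ∈ Y := shift_mem hY.2.2 _ hxu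
    have hxsv : (fun j => xv (j + (-(ℓ:ℤ) -
        (((block (fun i => Φ (xu i)) (-(ℓ:ℤ)) ((u.length : ℤ) - 1 + ℓ)).length : ℤ)
          + (wt.length : ℤ))))) ∈ Y := shift_mem hY.2.2 _ hxv
    have hpu : ∀ i : ℤ, (ℓ:ℤ) ≤ i → i ≤ (ℓ:ℤ) + (u.length : ℤ) - 1 →
        G y i = xu (i + (-(ℓ:ℤ) - 0)) := by
      intro i hi1 hi2
      exact pull y hy _ hxsu 0
        (((block (fun i => Φ (xu i)) (-(ℓ:ℤ)) ((u.length : ℤ) - 1 + ℓ)).length : ℤ) - 1)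
        (fun j hj1 hj2 => hptU j hj1 hj2) i (by omega) (by omega)
    have hpv : ∀ i : ℤ,
        ((block (fun i => Φ (xu i)) (-(ℓ:ℤ)) ((u.length : ℤ) - 1 + ℓ)).length : ℤ)
          + (wt.length : ℤ) + ℓ ≤ i →
        i ≤ ((block (fun i => Φ (xu i)) (-(ℓ:ℤ)) ((u.length : ℤ) - 1 + ℓ)).length : ℤ)
          + (wt.length : ℤ) + ℓ + (v.length : ℤ) - 1 →
        G y i = xv (i + (-(ℓ:ℤ) -
          (((block (fun i => Φ (xu i)) (-(ℓ:ℤ)) ((u.length : ℤ) - 1 + ℓ)).length : ℤ)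
            + (wt.length : ℤ)))) := by
      intro i hi1 hi2
      exact pull y hy _ hxsv
        (((block (fun i => Φ (xu i)) (-(ℓ:ℤ)) ((u.length : ℤ) - 1 + ℓ)).length : ℤ)
          + (wt.length : ℤ))
        (((block (fun i => Φ (xu i)) (-(ℓ:ℤ)) ((u.length : ℤ) - 1 + ℓ)).length : ℤ)
          + (wt.length : ℤ)
          + ((block (fun i => Φ (xv i)) (-(ℓ:ℤ)) ((v.length : ℤ) - 1 + ℓ)).length : ℤ) - 1)
        (fun j hj1 hj2 => hptV j hj1 hj2) i (by omega) (by omega)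
    have hu_blk : block (G y) (ℓ:ℤ) ((ℓ:ℤ) + (u.length : ℤ) - 1) = u := by
      have h3 := block_sub (-(ℓ:ℤ) - 0) hpu (ℓ:ℤ) ((ℓ:ℤ) + (u.length : ℤ) - 1) le_rfl le_rfl
      have e1 : (ℓ:ℤ) + (-(ℓ:ℤ) - 0) = 0 := by ring
      have e2 : (ℓ:ℤ) + (u.length : ℤ) - 1 + (-(ℓ:ℤ) - 0) = (u.length : ℤ) - 1 := by ring
      rw [e1, e2, ← heu] at h3
      exact h3
    have hv_blk : block (G y)
        (((block (fun i => Φ (xu i)) (-(ℓ:ℤ)) ((u.length : ℤ) - 1 + ℓ)).length : ℤ)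
          + (wt.length : ℤ) + ℓ)
        (((block (fun i => Φ (xu i)) (-(ℓ:ℤ)) ((u.length : ℤ) - 1 + ℓ)).length : ℤ)
          + (wt.length : ℤ) + ℓ + (v.length : ℤ) - 1) = v := by
      have h3 := block_sub _ hpv _ _ le_rfl le_rfl
      have e1 : ((block (fun i => Φ (xu i)) (-(ℓ:ℤ)) ((u.length : ℤ) - 1 + ℓ)).length : ℤ)
          + (wt.length : ℤ) + ℓ + (-(ℓ:ℤ) -
          (((block (fun i => Φ (xu i)) (-(ℓ:ℤ)) ((u.length : ℤ) - 1 + ℓ)).length : ℤ)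
            + (wt.length : ℤ))) = 0 := by ring
      have e2 : ((block (fun i => Φ (xu i)) (-(ℓ:ℤ)) ((u.length : ℤ) - 1 + ℓ)).length : ℤ)
          + (wt.length : ℤ) + ℓ + (v.length : ℤ) - 1 + (-(ℓ:ℤ) -
          (((block (fun i => Φ (xu i)) (-(ℓ:ℤ)) ((u.length : ℤ) - 1 + ℓ)).length : ℤ)
            + (wt.length : ℤ))) = (v.length : ℤ) - 1 := by ring
      rw [e1, e2, ← hev] at h3
      exact h3
    refine ⟨block (G y) ((ℓ:ℤ) + (u.length : ℤ))
      (((block (fun i => Φ (xu i)) (-(ℓ:ℤ)) ((u.length : ℤ) - 1 + ℓ)).length : ℤ)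
        + (wt.length : ℤ) + ℓ - 1), ?_⟩
    have hsp := block_split (G y) (ℓ:ℤ)
      (((block (fun i => Φ (xu i)) (-(ℓ:ℤ)) ((u.length : ℤ) - 1 + ℓ)).length : ℤ)
        + (wt.length : ℤ) + ℓ + (v.length : ℤ) - 1)
      ((ℓ:ℤ) + (u.length : ℤ)) (by omega) (by omega)
    rw [block_split (G y) ((ℓ:ℤ) + (u.length : ℤ))
      (((block (fun i => Φ (xu i)) (-(ℓ:ℤ)) ((u.length : ℤ) - 1 + ℓ)).length : ℤ)
        + (wt.length : ℤ) + ℓ + (v.length : ℤ) - 1)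
      (((block (fun i => Φ (xu i)) (-(ℓ:ℤ)) ((u.length : ℤ) - 1 + ℓ)).length : ℤ)
        + (wt.length : ℤ) + ℓ) (by omega) (by omega)] at hsp
    rw [hu_blk, hv_blk] at hsp
    have hadm := adm_block (hG y hy) (ℓ:ℤ)
      (((block (fun i => Φ (xu i)) (-(ℓ:ℤ)) ((u.length : ℤ) - 1 + ℓ)).length : ℤ)
        + (wt.length : ℤ) + ℓ + (v.length : ℤ) - 1)
    rw [hsp] at hadm
    have e : u ++ (block (G y) ((ℓ:ℤ) + (u.length : ℤ))
        (((block (fun i => Φ (xu i)) (-(ℓ:ℤ)) ((u.length : ℤ) - 1 + ℓ)).length : ℤ)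
          + (wt.length : ℤ) + ℓ - 1) ++ v)
        = u ++ block (G y) ((ℓ:ℤ) + (u.length : ℤ))
        (((block (fun i => Φ (xu i)) (-(ℓ:ℤ)) ((u.length : ℤ) - 1 + ℓ)).length : ℤ)
          + (wt.length : ℤ) + ℓ - 1) ++ v := by
      simp [List.append_assoc]
    rw [e] at hadm
    exact hadm
  -- a synchronizing word for Y
  have hsyncY : ∃ v0 : List A, IsSyncWord Y v0 := by
    obtain ⟨vt, hvt⟩ := hXtsync.2
    obtain ⟨y, hy, hey⟩ := adm_norm hXt.2.2 hvt.1
    have hblk : block y 0 (max ((vt.length : ℤ) - 1) 0)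
        = vt ++ block y (vt.length : ℤ) (max ((vt.length : ℤ) - 1) 0) := by
      rw [block_split y 0 (max ((vt.length : ℤ) - 1) 0) (vt.length : ℤ) (by omega) (by omega)]
      rw [← hey]
    have hsync2 : IsSyncWord Xt (block y 0 (max ((vt.length : ℤ) - 1) 0)) := by
      rw [hblk]
      have hadm : Admissible Xt ([] ++ vt ++ block y (vt.length : ℤ)
          (max ((vt.length : ℤ) - 1) 0)) := by
        have := adm_block hy 0 (max ((vt.length : ℤ) - 1) 0)
        rw [hblk] at this
        exact this
      exact sync_extend hvt hadm
    obtain ⟨i, -, -, hsyn⟩ := hstrong y hy 0 (max ((vt.length : ℤ) - 1) 0) (by omega) hsync2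
    refine ⟨[G y i], hsub (G y i) ?_⟩
    have hΦ : Φ (G y i) = y i := congrFun (hFG y hy) i
    rw [hΦ]
    exact hsyn
  refine ⟨⟨htrans, hsyncY⟩, ?_⟩
  intro x hx I₁ I₂ h12 hv
  obtain ⟨i, hi1, hi2, hsyn⟩ := hstrong (fun i => Φ (x i)) (hF x hx) (I₁ - ℓ) (I₂ + ℓ)
    (by omega) (hmain x hx I₁ I₂ h12 hv)
  exact ⟨i, by omega, by omega, hsub (x i) hsyn⟩
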